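/- Let H_n be the abelian group generated by the isomorphism classes of nonempty Gauss words of rank at most n, modulo the relations G1: xAAy = 0, G2: xAByBAz + 2·xAyAz = 0 (where any term of rank greater than n is set to 0), and G3, G4 as in Polyak algebra. Then for every Gauss word w of rank m ≤ n, the element represented by w satisfies 2^{n−m+1}·w = 0 in H_n. -/

import Mathlib

/-- A Gauss word: every letter that occurs, occurs exactly twice. -/
def IsGauss (w : List ℕ) : Prop := ∀ a ∈ w, w.count a = 2

/-- Rank of a word: the number of distinct letters occurring in it. -/
def rank (w : List ℕ) : ℕ := w.dedup.length

/-- Isomorphism of words: an injective relabeling of letters. -/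
def Isomorphic (w₁ w₂ : List ℕ) : Prop :=
  ∃ f : ℕ → ℕ, Function.Injective f ∧ w₂ = w₁.map f

open FreeAbelianGroup in
/-- Relators defining the truncated Polyak group `H n`: kill non-Gauss words,
the empty word and words of rank `> n` (G4), identify isomorphic words,
and impose G1, G2 and the eight-term relation G3. -/
def relators (n : ℕ) : Set (FreeAbelianGroup (List ℕ)) :=
  {r | (∃ w : List ℕ, ¬ IsGauss w ∧ r = of w) ∨
       (r = of ([] : List ℕ)) ∨
       -- G4: words of rank greater than n are 0
       (∃ w : List ℕ, n < rank w ∧ r = of w) ∨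
       -- identification of isomorphic words
       (∃ w w' : List ℕ, Isomorphic w w' ∧ r = of w - of w') ∨
       -- G1: xAAy = 0
       (∃ (x y : List ℕ) (A : ℕ), IsGauss (x ++ [A, A] ++ y) ∧
          r = of (x ++ [A, A] ++ y)) ∨
       -- G2: xAByBAz + 2·xAyAz = 0
       (∃ (x y z : List ℕ) (A B : ℕ), A ≠ B ∧
          IsGauss (x ++ [A, B] ++ y ++ [B, A] ++ z) ∧
          r = of (x ++ [A, B] ++ y ++ [B, A] ++ z) +
              2 • of (x ++ [A] ++ y ++ [A] ++ z)) ∨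
       -- G3: eight-term relation
       (∃ (x y z t : List ℕ) (A B C : ℕ), A ≠ B ∧ A ≠ C ∧ B ≠ C ∧
          IsGauss (x ++ [A, B] ++ y ++ [A, C] ++ z ++ [B, C] ++ t) ∧
          r = (of (x ++ [A, B] ++ y ++ [A, C] ++ z ++ [B, C] ++ t) +
               of (x ++ [A, B] ++ y ++ [A] ++ z ++ [B] ++ t) +
               of (x ++ [A] ++ y ++ [A, C] ++ z ++ [C] ++ t) +
               of (x ++ [B] ++ y ++ [C] ++ z ++ [B, C] ++ t)) -
              (of (x ++ [B, A] ++ y ++ [C, A] ++ z ++ [C, B] ++ t) +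
               of (x ++ [B, A] ++ y ++ [A] ++ z ++ [B] ++ t) +
               of (x ++ [A] ++ y ++ [C, A] ++ z ++ [C] ++ t) +
               of (x ++ [B] ++ y ++ [C] ++ z ++ [C, B] ++ t)))}

/-- The truncated Polyak group `H n`. -/
def H (n : ℕ) : Type :=
  FreeAbelianGroup (List ℕ) ⧸ AddSubgroup.closure (relators n)

instance (n : ℕ) : AddCommGroup (H n) :=
  QuotientAddGroup.Quotient.addCommGroup _

/-- The class of a Gauss word in `H n`. -/
def cls (n : ℕ) (w : List ℕ) : H n :=
  QuotientAddGroup.mk (FreeAbelianGroup.of w)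

lemma mk_rel_eq_zero {n : ℕ} {r : FreeAbelianGroup (List ℕ)} (h : r ∈ relators n) :
    (QuotientAddGroup.mk r : H n) = 0 :=
  (QuotientAddGroup.eq_zero_iff r).2 (AddSubgroup.subset_closure h)

lemma le_foldr_max {l : List ℕ} {a : ℕ} (h : a ∈ l) : a ≤ l.foldr max 0 := by
  induction l with
  | nil => simp at h
  | cons b t ih =>
    simp only [List.foldr_cons]
    rcases List.mem_cons.1 h with rfl | h
    · exact le_max_left _ _
    · exact le_trans (ih h) (le_max_right _ _)

/-- The key step: a nonempty Gauss word `w` admits a Gauss word `w'` of rank one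
more with `w' + 2 w = 0` in `H n` (via relation G2). -/
lemma step (n : ℕ) (w : List ℕ) (hw : IsGauss w) (hne : w ≠ []) :
    ∃ w' : List ℕ, IsGauss w' ∧ rank w' = rank w + 1 ∧
      cls n w' + 2 • cls n w = 0 := by
  -- decompose w = A :: y ++ A :: z
  obtain ⟨A, s, rfl⟩ : ∃ A s, w = A :: s := by
    cases w with
    | nil => exact absurd rfl hne
    | cons a t => exact ⟨a, t, rfl⟩
  have hA : (A :: s).count A = 2 := hw A List.mem_cons_self
  have hAs : A ∈ s := by
    have : s.count A = 1 := by
      simpa [List.count_cons] using hA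
    exact List.count_pos_iff.1 (by omega)
  obtain ⟨y, z, rfl⟩ := List.append_of_mem hAs
  -- fresh letter B
  set w : List ℕ := A :: (y ++ A :: z) with hwdef
  obtain ⟨B, hBnot⟩ : ∃ B, B ∉ w :=
    ⟨w.foldr max 0 + 1, fun h => by have := le_foldr_max h; omega⟩
  have hAB : A ≠ B := fun h => hBnot (h ▸ List.mem_cons_self)
  set w' : List ℕ := A :: B :: (y ++ B :: A :: z) with hw'def
  have hcount : ∀ a : ℕ, w'.count a = w.count a + (if B = a then 2 else 0) := by
    intro a
    rcases eq_or_ne B a with h | h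
    · subst h
      simp [hw'def, hwdef, List.count_cons, List.count_append, beq_iff_eq, Ne.symm hAB]
      omega
    · have h' : a ≠ B := Ne.symm h
      simp only [hw'def, hwdef, List.count_cons, List.count_append, beq_iff_eq, if_neg h']
      split_ifs <;> omega
  have hw' : IsGauss w' := by
    intro a ha
    rw [hcount a]
    by_cases h : B = a
    · subst h
      have h0 : w.count B = 0 := List.count_eq_zero.2 hBnot
      simp [h0]
    · rw [if_neg h, add_zero]
      apply hw
      have hpos : 0 < w'.count a := List.count_pos_iff.2 ha
      rw [hcount a, if_neg h, add_zero] at hpos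
      exact List.count_pos_iff.1 hpos
  have hrank : rank w' = rank w + 1 := by
    have h1 : rank w' = w'.toFinset.card := (List.card_toFinset w').symm
    have h2 : rank w = w.toFinset.card := (List.card_toFinset w).symm
    have hset : w'.toFinset = insert B w.toFinset := by
      ext a
      simp only [hw'def, hwdef, List.toFinset_cons, List.toFinset_append,
        Finset.mem_insert, Finset.mem_union]
      tauto
    rw [h1, h2, hset, Finset.card_insert_of_notMem (by simpa using hBnot)]
  refine ⟨w', hw', hrank, ?_⟩
  have hrel : (FreeAbelianGroup.of w' + 2 • FreeAbelianGroup.of w) ∈ relators n := by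
    refine Or.inr (Or.inr (Or.inr (Or.inr (Or.inr (Or.inl
      ⟨[], y, z, A, B, hAB, ?_, ?_⟩))))) <;> simp [hw'def, hwdef, hw'] <;> exact hw'
  have := mk_rel_eq_zero hrel
  rw [QuotientAddGroup.mk_add] at this
  have h2s : (QuotientAddGroup.mk (2 • FreeAbelianGroup.of w) : H n)
      = 2 • cls n w := by
    rw [two_smul, QuotientAddGroup.mk_add]; exact (two_smul ℕ (cls n w)).symm
  rw [h2s] at this
  exact this

lemma cls_nil_eq_zero (n : ℕ) : cls n ([] : List ℕ) = 0 :=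
  mk_rel_eq_zero (Or.inr (Or.inl rfl))

lemma cls_eq_zero_of_rank_gt {n : ℕ} {w : List ℕ} (h : n < rank w) : cls n w = 0 :=
  mk_rel_eq_zero (Or.inr (Or.inr (Or.inl ⟨w, h, rfl⟩)))

lemma key (n : ℕ) : ∀ (k m : ℕ) (w : List ℕ), IsGauss w → rank w = m →
    n = m + k → (2 ^ (k + 1)) • cls n w = 0 := by
  intro k
  induction k with
  | zero =>
    intro m w hw hm hn
    rcases eq_or_ne w [] with rfl | hne
    · simp [cls_nil_eq_zero]
    · obtain ⟨w', _, hr, hrel⟩ := step n w hw hne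
      have hz : cls n w' = 0 := cls_eq_zero_of_rank_gt (by omega)
      rw [hz, zero_add] at hrel
      simpa using hrel
  | succ k ih =>
    intro m w hw hm hn
    rcases eq_or_ne w [] with rfl | hne
    · simp [cls_nil_eq_zero]
    · obtain ⟨w', hw', hr, hrel⟩ := step n w hw hne
      have h1 : (2 ^ (k + 1)) • cls n w' = 0 :=
        ih (m + 1) w' hw' (by omega) (by omega)
      have h2 : cls n w' = -(2 • cls n w) := by
        rw [eq_neg_iff_add_eq_zero]; exact hrel
      rw [h2, smul_neg, neg_eq_zero, smul_smul] at h1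
      have : 2 ^ (k + 1) * 2 = 2 ^ (k + 1 + 1) := by ring
      rwa [this] at h1

/-- For a Gauss word of rank m ≤ n, its class in H_n is killed by 2^(n-m+1). -/
theorem two_pow_smul_eq_zero (n m : ℕ) (w : List ℕ) (hw : IsGauss w)
    (hm : rank w = m) (hmn : m ≤ n) :
    (2 ^ (n - m + 1)) • cls n w = 0 := by
  exact key n (n - m) m w hw hm (by omega)
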